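/- Let f: Z/aZ -> Q be a map with values in the rationals. Let B = {b : f(b) > 0}, let lambda_1 > ... > lambda_k > 0 be the distinct positive values of f, set B_i = {b : f(b) = lambda_i} and n_i = |B_i|, n = |B|. Then the problem set P(f) = {(b,c) : f(b+c) != f(b) + f(c)} contains at least n*(n+1)/2 pairs (b,c) with c in B. -/

import Mathlib

open Finset

-- existence of a problem step going backwards
lemma aux_exists (a : ℕ) [NeZero a] (f : ZMod a → ℚ) (c : ZMod a) (hc : 0 < f c)
    (b : ZMod a) : ∃ j : ℕ, f (b - (j+1) • c + c) ≠ f (b - (j+1) • c) + f c := by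
  by_contra h
  push_neg at h
  have hval : ∀ i : ℕ, f (b - i • c) = f b - i * f c := by
    intro i
    induction i with
    | zero => simp
    | succ i ih =>
      have h2 := h i
      have e : b - (i+1) • c + c = b - i • c := by
        rw [succ_nsmul]; abel
      rw [e] at h2
      -- h2 : f (b - i•c) = f (b - (i+1)•c) + f c
      have : f (b - (i+1) • c) = f (b - i • c) - f c := by linarith
      rw [this, ih]
      push_cast
      ring
  have h0 := hval a
  have hz : (a : ℕ) • c = 0 := by
    rw [nsmul_eq_mul, ZMod.natCast_self, zero_mul]
  rw [hz, sub_zero] at h0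
  have ha' : (0:ℚ) < (a : ℚ) := by
    exact_mod_cast Nat.pos_of_ne_zero (NeZero.ne a)
  nlinarith

lemma aux_inj (a : ℕ) [NeZero a] (f : ZMod a → ℚ) (c : ZMod a) (hc : 0 < f c) :
    ((Finset.univ.filter (fun b => 0 < f b)).filter (fun b => f b ≤ f c)).card ≤
    (Finset.univ.filter (fun b => f (b + c) ≠ f b + f c)).card := by
  classical
  set J : ZMod a → ℕ := fun b => Nat.find (aux_exists a f c hc b) with hJ
  have hstep : ∀ (b : ZMod a) (i : ℕ), i ≤ J b → f (b - i • c) = f b - i * f c := by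
    intro b i
    induction i with
    | zero => intro _; simp
    | succ i ih =>
      intro hi
      have hi' : i < J b := Nat.lt_of_succ_le hi
      have hnp := Nat.find_min (aux_exists a f c hc b) hi'
      push_neg at hnp
      have e : b - (i+1) • c + c = b - i • c := by
        rw [succ_nsmul]; abel
      rw [e] at hnp
      have ihv := ih (Nat.le_of_lt hi')
      have : f (b - (i+1) • c) = f (b - i • c) - f c := by linarith
      rw [this, ihv]
      push_cast
      ring
  apply Finset.card_le_card_of_injOn (fun b => b - (J b + 1) • c)
  · intro b _
    simp only [mem_coe, mem_filter, mem_univ, true_and]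
    have := Nat.find_spec (aux_exists a f c hc b)
    exact this
  · -- injectivity
    have key : ∀ b b', b ∈ (Finset.univ.filter (fun b => 0 < f b)).filter (fun b => f b ≤ f c) →
        b' ∈ (Finset.univ.filter (fun b => 0 < f b)).filter (fun b => f b ≤ f c) →
        b - (J b + 1) • c = b' - (J b' + 1) • c → J b' ≤ J b → b = b' := by
      intro b b' hb hb' heq hle
      simp only [mem_filter, mem_univ, true_and] at hb hb'
      set m : ℕ := J b - J b' with hm
      have hmadd : m + (J b' + 1) = J b + 1 := by omega
      have hb'eq : b' = b - m • c := by
        have : b - (J b + 1) • c = (b - m • c) - (J b' + 1) • c := by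
          rw [← hmadd, add_nsmul]; abel
        rw [this] at heq
        exact (sub_left_injective heq).symm
      have hmle : m ≤ J b := by omega
      have hv := hstep b m hmle
      rw [← hb'eq] at hv
      rcases Nat.eq_zero_or_pos m with h0 | h1
      · rw [hb'eq, h0]; simp
      · exfalso
        have : (1:ℚ) ≤ (m:ℚ) := by exact_mod_cast h1
        nlinarith [hb.1, hb.2, hb'.1]
    intro b hb b' hb' heq
    rcases le_total (J b') (J b) with h | h
    · exact key b b' hb hb' heq h
    · exact (key b' b hb' hb heq.symm h).symm

theorem positive_part_problems (a : ℕ) (ha : 0 < a) (f : ZMod a → ℚ) :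
    (Nat.card {b : ZMod a // 0 < f b} * (Nat.card {b : ZMod a // 0 < f b} + 1) : ℚ) / 2 ≤
      (Nat.card {p : ZMod a × ZMod a //
        f (p.1 + p.2) ≠ f p.1 + f p.2 ∧ 0 < f p.2} : ℚ) := by
  classical
  haveI : NeZero a := ⟨ha.ne'⟩
  set B : Finset (ZMod a) := Finset.univ.filter (fun b => 0 < f b) with hBdef
  set P : Finset (ZMod a × ZMod a) :=
    Finset.univ.filter (fun p => f (p.1 + p.2) ≠ f p.1 + f p.2 ∧ 0 < f p.2) with hPdef
  have hcard1 : Nat.card {b : ZMod a // 0 < f b} = B.card := by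
    rw [Nat.card_eq_fintype_card, Fintype.card_subtype]
  have hcard2 : Nat.card {p : ZMod a × ZMod a //
      f (p.1 + p.2) ≠ f p.1 + f p.2 ∧ 0 < f p.2} = P.card := by
    rw [Nat.card_eq_fintype_card, Fintype.card_subtype]
  -- fiberwise decomposition of P
  have hfiber : P.card = ∑ c ∈ B, (P.filter (fun p => p.2 = c)).card := by
    apply Finset.card_eq_sum_card_fiberwise
    intro p hp
    simp only [hPdef, mem_coe, mem_filter, mem_univ, true_and] at hp
    simp [hBdef, hp.2]
  have hfib2 : ∀ c ∈ B, (P.filter (fun p => p.2 = c)).card =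
      (Finset.univ.filter (fun b => f (b + c) ≠ f b + f c)).card := by
    intro c hc
    apply Finset.card_bij (fun p _ => p.1)
    · intro p hp
      simp only [hPdef, mem_filter, mem_univ, true_and] at hp ⊢
      rcases hp with ⟨⟨h1, _⟩, h2⟩
      rw [h2] at h1
      exact h1
    · intro p hp q hq hpq
      simp only [hPdef, mem_filter] at hp hq
      exact Prod.ext hpq (hp.2.trans hq.2.symm)
    · intro b hb
      simp only [mem_filter, mem_univ, true_and] at hb
      refine ⟨(b, c), ?_, rfl⟩
      simp only [hPdef, mem_filter, mem_univ, true_and]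
      simp only [hBdef, mem_filter, mem_univ, true_and] at hc
      exact ⟨⟨hb, hc⟩, trivial⟩
  -- per-c lower bound
  have hperc : ∀ c ∈ B, (B.filter (fun b => f b ≤ f c)).card ≤
      (Finset.univ.filter (fun b => f (b + c) ≠ f b + f c)).card := by
    intro c hc
    simp only [hBdef, mem_filter, mem_univ, true_and] at hc
    exact aux_inj a f c hc
  -- pair counting
  have hsum : B.card * (B.card + 1) ≤ 2 * ∑ c ∈ B, (B.filter (fun b => f b ≤ f c)).card := by
    have h1 : ∀ c, (B.filter (fun b => f b ≤ f c)).card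
        = ∑ b ∈ B, if f b ≤ f c then 1 else 0 := by
      intro c; rw [Finset.card_filter]
    calc B.card * (B.card + 1)
        = ∑ c ∈ B, ∑ b ∈ B, ((1:ℕ) + if b = c then 1 else 0) := by
          rw [Finset.sum_congr rfl (fun c hc => ?_)]
          · rw [Finset.sum_const, smul_eq_mul]
          · rw [Finset.sum_add_distrib, Finset.sum_const, smul_eq_mul, mul_one,
              Finset.sum_ite_eq' B c (fun _ => 1), if_pos hc]
      _ ≤ ∑ c ∈ B, ∑ b ∈ B, ((if f b ≤ f c then 1 else 0) + if f c ≤ f b then 1 else 0) := by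
          apply Finset.sum_le_sum; intro c _
          apply Finset.sum_le_sum; intro b _
          rcases eq_or_ne b c with rfl | hne
          · simp
          · rw [if_neg hne]
            rcases le_total (f b) (f c) with h | h
            · rw [if_pos h]; simp
            · rw [if_pos h]; simp
      _ = 2 * ∑ c ∈ B, ∑ b ∈ B, if f b ≤ f c then 1 else 0 := by
          rw [Finset.sum_congr rfl (fun c _ => Finset.sum_add_distrib)]
          rw [Finset.sum_add_distrib, two_mul]
          congr 1
          rw [Finset.sum_comm]
      _ = 2 * ∑ c ∈ B, (B.filter (fun b => f b ≤ f c)).card := by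
          congr 1
          exact Finset.sum_congr rfl (fun c _ => (h1 c).symm)
  have hmain : B.card * (B.card + 1) ≤ 2 * P.card := by
    calc B.card * (B.card + 1) ≤ 2 * ∑ c ∈ B, (B.filter (fun b => f b ≤ f c)).card := hsum
      _ ≤ 2 * ∑ c ∈ B, (Finset.univ.filter (fun b => f (b + c) ≠ f b + f c)).card := by
          exact Nat.mul_le_mul le_rfl (Finset.sum_le_sum hperc)
      _ = 2 * ∑ c ∈ B, (P.filter (fun p => p.2 = c)).card := by
          congr 1
          exact Finset.sum_congr rfl (fun c hc => (hfib2 c hc).symm)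
      _ = 2 * P.card := by rw [← hfiber]
  rw [hcard1, hcard2, div_le_iff₀ (by norm_num : (0:ℚ) < 2)]
  have h2 : ((B.card * (B.card + 1) : ℕ) : ℚ) ≤ ((2 * P.card : ℕ) : ℚ) := by
    exact_mod_cast hmain
  push_cast at h2
  linarith
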